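/- Define the sequence δ_k = 1 - γ̄_k by δ_0 = p and δ_{k+1} = F(δ_k) with ν t (1 - C t^{q-1}) ≤ F(t) ≤ ν t for all t ∈ [0,1], where ν > 1, C > 0, q ∈ (1,2]. Let k₁* = min{k : ∑_{i=0}^k C δ_i^{q-1} > 1/2}. Then for all k ≤ k₁*, (1/2) ν^k p ≤ δ_k ≤ ν^k p, and the upper bound δ_k ≤ ν^k p holds for all k. -/
import Mathlib


/-- Let `δ_0 = p`, `δ_{k+1} = F(δ_k)` where `F : [0,1] → [0,1]` satisfies
`ν t (1 - C t^{q-1}) ≤ F(t) ≤ ν t`, with `ν > 1`, `C > 0`, `q ∈ (1,2]`.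
With `k₁* = min{k : ∑_{i=0}^k C δ_i^{q-1} > 1/2}`, we have
`(1/2) ν^k p ≤ δ_k ≤ ν^k p` for all `k ≤ k₁*`, and `δ_k ≤ ν^k p` for all `k`. -/
theorem stmt8 (q C ν p : ℝ) (hq1 : 1 < q) (hq2 : q ≤ 2) (hC : 0 < C) (hν : 1 < ν)
    (hp : p ∈ Set.Icc (0 : ℝ) 1)
    (F : ℝ → ℝ)
    (hF01 : ∀ t ∈ Set.Icc (0 : ℝ) 1, F t ∈ Set.Icc (0 : ℝ) 1)
    (hFlow : ∀ t ∈ Set.Icc (0 : ℝ) 1, ν * t * (1 - C * t ^ (q - 1)) ≤ F t)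
    (hFup : ∀ t ∈ Set.Icc (0 : ℝ) 1, F t ≤ ν * t)
    (δ : ℕ → ℝ) (hδ0 : δ 0 = p) (hrec : ∀ k, δ (k + 1) = F (δ k))
    (k1 : ℕ)
    (hk1 : 1 / 2 < ∑ i ∈ Finset.range (k1 + 1), C * δ i ^ (q - 1))
    (hk1min : ∀ k < k1, ∑ i ∈ Finset.range (k + 1), C * δ i ^ (q - 1) ≤ 1 / 2) :
    (∀ k ≤ k1, (1 / 2) * ν ^ k * p ≤ δ k) ∧ ∀ k, δ k ≤ ν ^ k * p := by

  have hmem : ∀ k, δ k ∈ Set.Icc (0:ℝ) 1 := by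
    intro k; induction k with
    | zero => rwa [hδ0]
    | succ k ih => rw [hrec]; exact hF01 _ ih
  have hup : ∀ k, δ k ≤ ν ^ k * p := by
    intro k; induction k with
    | zero => simp [hδ0]
    | succ k ih =>
      rw [hrec]
      calc F (δ k) ≤ ν * δ k := hFup _ (hmem k)
        _ ≤ ν * (ν ^ k * p) := mul_le_mul_of_nonneg_left ih (by linarith)
        _ = ν ^ (k+1) * p := by ring
  refine ⟨?_, hup⟩
  have hs_nonneg : ∀ i, 0 ≤ C * δ i ^ (q-1) :=
    fun i => mul_nonneg hC.le (Real.rpow_nonneg (hmem i).1 _)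
  have hS_nonneg : ∀ k, 0 ≤ ∑ i ∈ Finset.range k, C * δ i ^ (q-1) :=
    fun k => Finset.sum_nonneg fun i _ => hs_nonneg i
  have key : ∀ k ≤ k1, (1 - ∑ i ∈ Finset.range k, C * δ i ^ (q-1)) * (ν ^ k * p) ≤ δ k := by
    intro k hk
    induction k with
    | zero => simp [hδ0]
    | succ k ih =>
      have hklt : k < k1 := Nat.lt_of_succ_le hk
      have ih' := ih hklt.le
      have hsum : (∑ i ∈ Finset.range k, C * δ i ^ (q-1)) + C * δ k ^ (q-1) ≤ 1/2 := by
        have := hk1min k hklt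
        rwa [Finset.sum_range_succ] at this
      set S := ∑ i ∈ Finset.range k, C * δ i ^ (q-1) with hSdef
      have hS0 : 0 ≤ S := hS_nonneg k
      have hs0 : 0 ≤ C * δ k ^ (q-1) := hs_nonneg k
      have hlow := hFlow _ (hmem k)
      have hpow : (0:ℝ) < ν ^ k := pow_pos (by linarith) k
      have hp0 : 0 ≤ p := hp.1
      rw [hrec, Finset.sum_range_succ, ← hSdef]
      have h1 : ν * δ k * (1 - C * δ k ^ (q-1)) ≤ F (δ k) := hlow
      have h2 : (1 - S) * (ν ^ k * p) * (ν * (1 - C * δ k ^ (q-1))) ≤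
          δ k * (ν * (1 - C * δ k ^ (q-1))) := by
        apply mul_le_mul_of_nonneg_right ih'
        have h3 : C * δ k ^ (q-1) ≤ 1/2 := by linarith
        have : (0:ℝ) < ν := by linarith
        apply mul_nonneg this.le; linarith
      calc (1 - (S + C * δ k ^ (q-1))) * (ν ^ (k+1) * p)
          ≤ (1 - S) * (ν ^ k * p) * (ν * (1 - C * δ k ^ (q-1))) := by
            rw [pow_succ]
            nlinarith [mul_nonneg (mul_nonneg hS0 hs0)
              (mul_nonneg (mul_nonneg hpow.le (by linarith : (0:ℝ) ≤ ν)) hp0)]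
        _ ≤ δ k * (ν * (1 - C * δ k ^ (q-1))) := h2
        _ = ν * δ k * (1 - C * δ k ^ (q-1)) := by ring
        _ ≤ F (δ k) := h1
  intro k hk
  have hSk : ∑ i ∈ Finset.range k, C * δ i ^ (q-1) ≤ 1/2 := by
    cases k with
    | zero => simp
    | succ m => exact hk1min m (Nat.lt_of_succ_le hk)
  have hpow : (0:ℝ) ≤ ν ^ k * p := mul_nonneg (pow_pos (by linarith) k).le hp.1
  have := key k hk
  nlinarith
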